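/- Let G be a finite multigraph whose (k+1)-core is empty, i.e., every nonempty subgraph of G has a vertex of degree at most k. Then the edge set of G can be partitioned into k forests (equivalently, G has rank equal to its number of edges in the union of k copies of the cycle matroid). -/

import Mathlib

open scoped Classical

/-- An edge set `S` is a forest (acyclic) iff every nonempty subset spans
strictly more vertices than it has edges. -/
noncomputable def IsForestEdgeSet {V E : Type*} [Fintype V] [Fintype E]
    (ends : E → Sym2 V) (S : Finset E) : Prop :=
  ∀ S' ⊆ S, S'.Nonempty →
    S'.card + 1 ≤ (Finset.univ.filter (fun v : V => ∃ e ∈ S', v ∈ ends e)).card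

/-- Degeneracy ordering: an injective rank function such that each vertex has
at most `k` incident edges whose endpoints all have rank at least its own. -/
lemma exists_rank_aux {V E : Type*} [Fintype V] [Fintype E] (ends : E → Sym2 V) (k : ℕ)
    (hcore : ∀ A : Finset V, A.Nonempty → ∃ v ∈ A,
      (Finset.univ.filter (fun e : E => v ∈ ends e ∧ ∀ u ∈ ends e, u ∈ A)).card ≤ k)
    (A : Finset V) :
    ∃ r : V → ℕ, Set.InjOn r A ∧ ∀ v ∈ A,
      (Finset.univ.filter (fun e : E => v ∈ ends e ∧
        ∀ u ∈ ends e, u ∈ A ∧ r v ≤ r u)).card ≤ k := by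
  induction A using Finset.strongInduction with
  | _ A ih =>
    rcases A.eq_empty_or_nonempty with rfl | hA
    · exact ⟨fun _ => 0, by simp, by simp⟩
    · obtain ⟨v, hv, hvk⟩ := hcore A hA
      obtain ⟨r, hinj, hr⟩ := ih (A.erase v) (Finset.erase_ssubset hv)
      refine ⟨fun u => if u = v then 0 else r u + 1, ?_, ?_⟩
      · intro u hu w hw huw
        by_cases h1 : u = v <;> by_cases h2 : w = v
        · exact h1.trans h2.symm
        · simp [h1, h2] at huw
        · simp [h1, h2] at huw
        · simp [h1, h2] at huw
          exact hinj (Finset.mem_erase.2 ⟨h1, hu⟩) (Finset.mem_erase.2 ⟨h2, hw⟩) huw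
      · intro u hu
        by_cases h1 : u = v
        · subst h1
          refine le_trans (Finset.card_le_card ?_) hvk
          intro e he
          simp only [Finset.mem_filter, Finset.mem_univ, true_and] at he ⊢
          exact ⟨he.1, fun w hw => (he.2 w hw).1⟩
        · refine le_trans (Finset.card_le_card ?_) (hr u (Finset.mem_erase.2 ⟨h1, hu⟩))
          intro e he
          simp only [Finset.mem_filter, Finset.mem_univ, true_and] at he ⊢
          refine ⟨he.1, fun w hw => ?_⟩
          obtain ⟨hwA, hle⟩ := he.2 w hw
          have hwv : w ≠ v := by
            intro h; subst h
            simp [h1] at hle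
          simp [h1, hwv] at hle
          exact ⟨Finset.mem_erase.2 ⟨hwv, hwA⟩, hle⟩

/-- If a finite loopless multigraph has empty `(k+1)`-core, i.e. every induced
subgraph on a nonempty vertex set has a vertex of degree at most `k`, then its
edge set can be partitioned into `k` forests. -/
theorem stmt3 {V E : Type*} [Fintype V] [Fintype E] (ends : E → Sym2 V)
    (hloop : ∀ e, ¬ (ends e).IsDiag) (k : ℕ) (hk : 1 ≤ k)
    (hcore : ∀ A : Finset V, A.Nonempty → ∃ v ∈ A,
      (Finset.univ.filter
        (fun e : E => v ∈ ends e ∧ ∀ u ∈ ends e, u ∈ A)).card ≤ k) :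
    ∃ f : E → Fin k, ∀ j : Fin k,
      IsForestEdgeSet ends (Finset.univ.filter (fun e => f e = j)) := by
  obtain ⟨r, hinjOn, hr⟩ := exists_rank_aux ends k hcore Finset.univ
  have hinj : Function.Injective r := fun x y h =>
    hinjOn (Finset.mem_univ x) (Finset.mem_univ y) h
  -- endpoints of each edge, ordered by rank
  have hex : ∀ e : E, ∃ a b : V, ends e = s(a, b) ∧ r a < r b := by
    intro e
    obtain ⟨y, hy⟩ := Sym2.mem_iff_exists.mp (ends e).out_fst_mem
    set x := (ends e).out.1
    have hne : x ≠ y := by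
      intro h; apply hloop e; rw [hy, h]; exact Sym2.isDiag_iff_proj_eq.2 rfl
    rcases lt_or_gt_of_ne (fun h => hne (hinj h)) with h | h
    · exact ⟨x, y, hy, h⟩
    · exact ⟨y, x, by rw [hy, Sym2.eq_swap], h⟩
  choose a b hab hlt using hex
  have hamem : ∀ e, a e ∈ ends e := fun e => by rw [hab e]; exact Sym2.mem_mk_left _ _
  have hbmem : ∀ e, b e ∈ ends e := fun e => by rw [hab e]; exact Sym2.mem_mk_right _ _
  -- edges owned by a vertex
  set O : V → Finset E := fun v => Finset.univ.filter (fun e => a e = v) with hO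
  have hOcard : ∀ v, (O v).card ≤ k := by
    intro v
    refine le_trans (Finset.card_le_card ?_) (hr v (Finset.mem_univ v))
    intro e he
    simp only [hO, Finset.mem_filter, Finset.mem_univ, true_and] at he
    subst he
    simp only [Finset.mem_filter, Finset.mem_univ, true_and]
    refine ⟨hamem e, fun u hu => ?_⟩
    rw [hab e] at hu
    rcases Sym2.mem_iff.1 hu with rfl | rfl
    · exact le_refl _
    · exact le_of_lt (hlt e)
  -- an arbitrary injection of E into ℕ to break ties
  set ι : E → ℕ := fun e => (Fintype.equivFin E e : ℕ) with hι
  have hιinj : Function.Injective ι := fun x y h => by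
    apply (Fintype.equivFin E).injective; exact Fin.val_injective h
  -- the coloring
  have hfk : ∀ e : E, ((O (a e)).filter (fun e' => ι e' < ι e)).card < k := by
    intro e
    have h1 : (O (a e)).filter (fun e' => ι e' < ι e) ⊆ (O (a e)).erase e := by
      intro e' he'
      simp only [Finset.mem_filter] at he'
      exact Finset.mem_erase.2 ⟨fun h => by subst h; exact lt_irrefl _ he'.2, he'.1⟩
    have h2 : e ∈ O (a e) := by simp [hO]
    calc ((O (a e)).filter (fun e' => ι e' < ι e)).card
        ≤ ((O (a e)).erase e).card := Finset.card_le_card h1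
      _ < (O (a e)).card := Finset.card_erase_lt_of_mem h2
      _ ≤ k := hOcard (a e)
  refine ⟨fun e => ⟨_, hfk e⟩, ?_⟩
  -- key: within a color class, the owner map is injective
  have hkey : ∀ e1 e2 : E, a e1 = a e2 →
      ((O (a e1)).filter (fun e' => ι e' < ι e1)).card =
      ((O (a e2)).filter (fun e' => ι e' < ι e2)).card → e1 = e2 := by
    intro e1 e2 hv hc
    by_contra hne
    rcases lt_or_gt_of_ne (fun h => hne (hιinj h)) with h | h
    · have : (O (a e1)).filter (fun e' => ι e' < ι e1) ⊂
          (O (a e2)).filter (fun e' => ι e' < ι e2) := by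
        rw [← hv]
        refine Finset.ssubset_iff_of_subset ?_ |>.2 ⟨e1, ?_, ?_⟩
        · intro e' he'
          simp only [Finset.mem_filter] at he' ⊢
          exact ⟨he'.1, he'.2.trans h⟩
        · simp only [Finset.mem_filter]
          exact ⟨by simp [hO], h⟩
        · simp
      exact absurd hc (Nat.ne_of_lt (Finset.card_lt_card this))
    · have : (O (a e2)).filter (fun e' => ι e' < ι e2) ⊂
          (O (a e1)).filter (fun e' => ι e' < ι e1) := by
        rw [hv]
        refine Finset.ssubset_iff_of_subset ?_ |>.2 ⟨e2, ?_, ?_⟩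
        · intro e' he'
          simp only [Finset.mem_filter] at he' ⊢
          exact ⟨he'.1, he'.2.trans h⟩
        · simp only [Finset.mem_filter]
          exact ⟨by simp [hO, hv], h⟩
        · simp
      exact absurd hc.symm (Nat.ne_of_lt (Finset.card_lt_card this))
  intro j S' hS' hS'ne
  set span := Finset.univ.filter (fun v : V => ∃ e ∈ S', v ∈ ends e) with hspan
  have hspan_mem : ∀ e ∈ S', ∀ v ∈ ends e, v ∈ span := by
    intro e he v hv
    simp only [hspan, Finset.mem_filter, Finset.mem_univ, true_and]
    exact ⟨e, he, hv⟩
  have hspanne : span.Nonempty := by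
    obtain ⟨e, he⟩ := hS'ne
    exact ⟨a e, hspan_mem e he _ (hamem e)⟩
  obtain ⟨w, hw, hwmax⟩ := Finset.exists_max_image span r hspanne
  -- image of the owner map
  have hinjS : Set.InjOn a S' := by
    intro e1 he1 e2 he2 hv
    have h1 := hS' he1
    have h2 := hS' he2
    simp only [Finset.mem_filter] at h1 h2
    apply hkey e1 e2 hv
    exact congrArg Fin.val (h1.2.trans h2.2.symm)
  have himg : S'.image a ⊆ span.erase w := by
    intro v hv
    obtain ⟨e, he, rfl⟩ := Finset.mem_image.1 hv
    refine Finset.mem_erase.2 ⟨?_, hspan_mem e he _ (hamem e)⟩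
    intro h
    have hb : b e ∈ span := hspan_mem e he _ (hbmem e)
    have := hwmax _ hb
    rw [← h] at this
    exact absurd (lt_of_lt_of_le (hlt e) this) (lt_irrefl _)
  have hcard : S'.card ≤ span.card - 1 := by
    calc S'.card = (S'.image a).card := (Finset.card_image_of_injOn hinjS).symm
      _ ≤ (span.erase w).card := Finset.card_le_card himg
      _ = span.card - 1 := Finset.card_erase_of_mem hw
  have hpos : 1 ≤ span.card := Finset.card_pos.2 hspanne
  omega
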